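/- The Lie-Yamaguti algebra structure 𝓛₂₉ on ℂ⁴, given by [e₁,e₂]=e₃, [e₁,e₃]=e₄, [e₂,e₃]=e₄, [e₁,e₃,e₂]=e₄, [e₂,e₃,e₁]=e₄, degenerates to the structure 𝓛₂₇ given by [e₁,e₂]=e₃, [e₁,e₃,e₂]=e₄, [e₂,e₃,e₁]=e₄. -/

import Mathlib

open Filter Matrix Topology

/-- ℂ⁴ -/
abbrev V4 : Type := Fin 4 → ℂ

/-- GL₄(ℂ) -/
abbrev GL4 := Matrix.GeneralLinearGroup (Fin 4) ℂ

/-- structure constants of a bilinear map on ℂ⁴: `μ i j` is the value on `(eᵢ, eⱼ)`. -/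
abbrev Bil4 := Fin 4 → Fin 4 → V4

/-- structure constants of a trilinear map on ℂ⁴. -/
abbrev Tril4 := Fin 4 → Fin 4 → Fin 4 → V4

/-- standard basis vectors -/
noncomputable def e4 (k : Fin 4) : V4 := Pi.single k (1 : ℂ)

/-- action of `g ∈ GL₄(ℂ)` on a bilinear map: `(g·μ)(x,y) = g μ(g⁻¹x, g⁻¹y)`,
in structure constants. -/
noncomputable def actBil (g : GL4) (μ : Bil4) : Bil4 := fun i j =>
  (g : Matrix (Fin 4) (Fin 4) ℂ).mulVec
    (∑ p, ∑ q,
      (((g⁻¹ : GL4) : Matrix (Fin 4) (Fin 4) ℂ) p i *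
       ((g⁻¹ : GL4) : Matrix (Fin 4) (Fin 4) ℂ) q j) • μ p q)

/-- action of `g ∈ GL₄(ℂ)` on a trilinear map:
`(g·τ)(x,y,z) = g τ(g⁻¹x, g⁻¹y, g⁻¹z)`, in structure constants. -/
noncomputable def actTril (g : GL4) (τ : Tril4) : Tril4 := fun i j k =>
  (g : Matrix (Fin 4) (Fin 4) ℂ).mulVec
    (∑ p, ∑ q, ∑ r,
      (((g⁻¹ : GL4) : Matrix (Fin 4) (Fin 4) ℂ) p i *
       ((g⁻¹ : GL4) : Matrix (Fin 4) (Fin 4) ℂ) q j *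
       ((g⁻¹ : GL4) : Matrix (Fin 4) (Fin 4) ℂ) r k) • τ p q r)

/-- `(μ,τ)` degenerates to `(lam,sig)`: there is a curve `g : ℂ∖{0} → GL₄(ℂ)` with
`g(t)·μ → lam` and `g(t)·τ → sig` as `t → 0`. -/
def Degenerates (μ : Bil4) (τ : Tril4) (lam : Bil4) (sig : Tril4) : Prop :=
  ∃ g : ℂ → GL4,
    Tendsto (fun t => actBil (g t) μ) (𝓝[≠] (0 : ℂ)) (𝓝 lam) ∧
    Tendsto (fun t => actTril (g t) τ) (𝓝[≠] (0 : ℂ)) (𝓝 sig)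

noncomputable def μL29 : Bil4 := fun i j =>
  if i = (0 : Fin 4) ∧ j = (1 : Fin 4) then e4 2
  else if i = (1 : Fin 4) ∧ j = (0 : Fin 4) then -(e4 2)
  else if i = (0 : Fin 4) ∧ j = (2 : Fin 4) then e4 3
  else if i = (2 : Fin 4) ∧ j = (0 : Fin 4) then -(e4 3)
  else if i = (1 : Fin 4) ∧ j = (2 : Fin 4) then e4 3
  else if i = (2 : Fin 4) ∧ j = (1 : Fin 4) then -(e4 3)
  else 0

noncomputable def τL29 : Tril4 := fun i j k =>
  if i = (0 : Fin 4) ∧ j = (2 : Fin 4) ∧ k = (1 : Fin 4) then e4 3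
  else if i = (2 : Fin 4) ∧ j = (0 : Fin 4) ∧ k = (1 : Fin 4) then -(e4 3)
  else if i = (1 : Fin 4) ∧ j = (2 : Fin 4) ∧ k = (0 : Fin 4) then e4 3
  else if i = (2 : Fin 4) ∧ j = (1 : Fin 4) ∧ k = (0 : Fin 4) then -(e4 3)
  else 0

noncomputable def μL27 : Bil4 := fun i j =>
  if i = (0 : Fin 4) ∧ j = (1 : Fin 4) then e4 2
  else if i = (1 : Fin 4) ∧ j = (0 : Fin 4) then -(e4 2)
  else 0

noncomputable def τL27 : Tril4 := fun i j k =>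
  if i = (0 : Fin 4) ∧ j = (2 : Fin 4) ∧ k = (1 : Fin 4) then e4 3
  else if i = (2 : Fin 4) ∧ j = (0 : Fin 4) ∧ k = (1 : Fin 4) then -(e4 3)
  else if i = (1 : Fin 4) ∧ j = (2 : Fin 4) ∧ k = (0 : Fin 4) then e4 3
  else if i = (2 : Fin 4) ∧ j = (1 : Fin 4) ∧ k = (0 : Fin 4) then -(e4 3)
  else 0


/-! ### Auxiliary material for the proof -/

noncomputable def dvec (t : ℂ) : Fin 4 → ℂ := ![t, t, t^2, t^4]
noncomputable def dinvv (t : ℂ) : Fin 4 → ℂ := ![t⁻¹, t⁻¹, (t^2)⁻¹, (t^4)⁻¹]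

noncomputable def gmat (t : ℂ) : GL4 :=
  if h : t = 0 then 1 else
  { val := Matrix.diagonal (dvec t),
    inv := Matrix.diagonal (dinvv t),
    val_inv := by
      rw [Matrix.diagonal_mul_diagonal]
      ext i j
      rcases eq_or_ne i j with rfl | hij
      · rw [Matrix.diagonal_apply_eq, Matrix.one_apply_eq]
        fin_cases i <;> simp [dvec, dinvv] <;> field_simp
      · rw [Matrix.diagonal_apply_ne _ hij, Matrix.one_apply_ne hij]
    inv_val := by
      rw [Matrix.diagonal_mul_diagonal]
      ext i j
      rcases eq_or_ne i j with rfl | hij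
      · rw [Matrix.diagonal_apply_eq, Matrix.one_apply_eq]
        fin_cases i <;> simp [dvec, dinvv] <;> field_simp
      · rw [Matrix.diagonal_apply_ne _ hij, Matrix.one_apply_ne hij] }

lemma gmat_coe (t : ℂ) (h : t ≠ 0) :
    ((gmat t : GL4) : Matrix (Fin 4) (Fin 4) ℂ) = Matrix.diagonal (dvec t) := by
  simp [gmat, h]

lemma gmat_inv_coe (t : ℂ) (h : t ≠ 0) :
    (((gmat t)⁻¹ : GL4) : Matrix (Fin 4) (Fin 4) ℂ) = Matrix.diagonal (dinvv t) := by
  simp only [gmat, dif_neg h]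
  rfl

/-- extra part of the bilinear structure -/
noncomputable def ν4 : Bil4 := fun i j =>
  if i = (0 : Fin 4) ∧ j = (2 : Fin 4) then e4 3
  else if i = (2 : Fin 4) ∧ j = (0 : Fin 4) then -(e4 3)
  else if i = (1 : Fin 4) ∧ j = (2 : Fin 4) then e4 3
  else if i = (2 : Fin 4) ∧ j = (1 : Fin 4) then -(e4 3)
  else 0

lemma sum_mu (f : Fin 4 → Fin 4 → ℂ) :
    (∑ p, ∑ q, (f p q) • μL29 p q) =
      (f 0 1 - f 1 0) • e4 2 + (f 0 2 + f 1 2 - f 2 0 - f 2 1) • e4 3 := by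
  simp [Fin.sum_univ_four, μL29]
  module

lemma sum_tau (f : Fin 4 → Fin 4 → Fin 4 → ℂ) :
    (∑ p, ∑ q, ∑ r, (f p q r) • τL29 p q r) =
      (f 0 2 1 - f 2 0 1 + f 1 2 0 - f 2 1 0) • e4 3 := by
  simp [Fin.sum_univ_four, τL29]
  module

lemma key1 (t : ℂ) (h : t ≠ 0) (i j : Fin 4) (k : Fin 4) :
    actBil (gmat t) μL29 i j k = μL27 i j k + t * ν4 i j k := by
  rw [actBil, gmat_coe t h, gmat_inv_coe t h, sum_mu]
  fin_cases i <;> fin_cases j <;> fin_cases k <;>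
    simp [Matrix.mulVec_diagonal, Matrix.diagonal_apply, dvec, dinvv,
      e4, μL27, ν4, Pi.single_apply] <;>
    (try field_simp) <;> (try ring)

set_option maxHeartbeats 4000000 in
lemma key2 (t : ℂ) (h : t ≠ 0) (i j k : Fin 4) (l : Fin 4) :
    actTril (gmat t) τL29 i j k l = τL27 i j k l := by
  rw [actTril, gmat_coe t h, gmat_inv_coe t h, sum_tau]
  fin_cases i <;> fin_cases j <;> fin_cases k <;> fin_cases l <;>
    simp [Matrix.mulVec_diagonal, Matrix.diagonal_apply, dvec, dinvv,
      e4, τL27, Pi.single_apply] <;>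
    (try field_simp) <;> (try ring)

/-- 𝓛₂₉ degenerates to 𝓛₂₇. -/
theorem stmt5 : Degenerates μL29 τL29 μL27 τL27 := by
  refine ⟨gmat, ?_, ?_⟩
  · have hev : ∀ᶠ t in 𝓝[≠] (0 : ℂ),
        actBil (gmat t) μL29 = (fun i j k => μL27 i j k + t * ν4 i j k) := by
      filter_upwards [self_mem_nhdsWithin] with t ht
      funext i j k
      exact key1 t ht i j k
    refine Tendsto.congr' (EventuallyEq.symm hev) ?_
    rw [tendsto_pi_nhds]; intro i
    rw [tendsto_pi_nhds]; intro j
    rw [tendsto_pi_nhds]; intro k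
    have : Tendsto (fun t : ℂ => μL27 i j k + t * ν4 i j k) (𝓝 0)
        (𝓝 (μL27 i j k + 0 * ν4 i j k)) := by
      exact (tendsto_const_nhds.add ((continuous_id.mul continuous_const).tendsto 0))
    simpa using this.mono_left nhdsWithin_le_nhds
  · have hev : ∀ᶠ t in 𝓝[≠] (0 : ℂ), actTril (gmat t) τL29 = τL27 := by
      filter_upwards [self_mem_nhdsWithin] with t ht
      funext i j k l
      exact key2 t ht i j k l
    exact Tendsto.congr' (EventuallyEq.symm hev) tendsto_const_nhds
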